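/- The group generated by g₁ and g₂ acts transitively on the vertex set Fin 4 × Fin 3 of G: for any two vertices u and w there exists σ in the subgroup generated by g₁ and g₂ with σ u = w. -/
import Mathlib


/-- `g₁`: the product of the disjoint transpositions
`(0,0)↔(1,0)`, `(0,1)↔(1,2)`, `(0,2)↔(1,1)`, `(2,1)↔(2,2)`, `(3,1)↔(3,2)`;
it fixes `(2,0)` and `(3,0)`. -/
def g₁ : Equiv.Perm (Fin 4 × Fin 3) :=
  Equiv.swap (0, 0) (1, 0) * Equiv.swap (0, 1) (1, 2) * Equiv.swap (0, 2) (1, 1) *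
    Equiv.swap (2, 1) (2, 2) * Equiv.swap (3, 1) (3, 2)

/-- The 4-cycle `a → b → c → d → a`. -/
def cyc4 (a b c d : Fin 4 × Fin 3) : Equiv.Perm (Fin 4 × Fin 3) :=
  Equiv.swap a d * Equiv.swap a c * Equiv.swap a b

/-- `g₂`: the product of the disjoint 4-cycles
`(0,0)→(1,2)→(2,0)→(3,2)→(0,0)`, `(1,0)→(2,2)→(3,0)→(0,2)→(1,0)`,
`(0,1)→(1,1)→(2,1)→(3,1)→(0,1)`. -/
def g₂ : Equiv.Perm (Fin 4 × Fin 3) :=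
  cyc4 (0, 0) (1, 2) (2, 0) (3, 2) * cyc4 (1, 0) (2, 2) (3, 0) (0, 2) *
    cyc4 (0, 1) (1, 1) (2, 1) (3, 1)

lemma reach (v : Fin 4 × Fin 3) :
    ∃ σ ∈ Subgroup.closure ({g₁, g₂} : Set (Equiv.Perm (Fin 4 × Fin 3))),
      σ (0, 0) = v := by
  have h1 : g₁ ∈ Subgroup.closure ({g₁, g₂} : Set (Equiv.Perm (Fin 4 × Fin 3))) :=
    Subgroup.subset_closure (by simp)
  have h2 : g₂ ∈ Subgroup.closure ({g₁, g₂} : Set (Equiv.Perm (Fin 4 × Fin 3))) :=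
    Subgroup.subset_closure (by simp)
  fin_cases v
  · exact ⟨1, one_mem _, by decide⟩
  · exact ⟨g₁*g₂, mul_mem h1 h2, by decide⟩
  · exact ⟨g₂^3*g₁, mul_mem (pow_mem h2 3) h1, by decide⟩
  · exact ⟨g₁, h1, by decide⟩
  · exact ⟨g₂*g₁*g₂, mul_mem (mul_mem h2 h1) h2, by decide⟩
  · exact ⟨g₂, h2, by decide⟩
  · exact ⟨g₂^2, pow_mem h2 2, by decide⟩
  · exact ⟨g₂^2*g₁*g₂, mul_mem (mul_mem (pow_mem h2 2) h1) h2, by decide⟩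
  · exact ⟨g₂*g₁, mul_mem h2 h1, by decide⟩
  · exact ⟨g₂^2*g₁, mul_mem (pow_mem h2 2) h1, by decide⟩
  · exact ⟨g₂^3*g₁*g₂, mul_mem (mul_mem (pow_mem h2 3) h1) h2, by decide⟩
  · exact ⟨g₂^3, pow_mem h2 3, by decide⟩

theorem vertex_transitive (u w : Fin 4 × Fin 3) :
    ∃ σ ∈ Subgroup.closure ({g₁, g₂} : Set (Equiv.Perm (Fin 4 × Fin 3))),
      σ u = w := by
  obtain ⟨a, ha, hau⟩ := reach u
  obtain ⟨b, hb, hbw⟩ := reach w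
  refine ⟨b * a⁻¹, mul_mem hb (inv_mem ha), ?_⟩
  have : a⁻¹ u = (0, 0) := by rw [← hau]; simp
  rw [Equiv.Perm.mul_apply, this]; exact hbw
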